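/- Let A, B, C, D be pairwise distinct points of ℝ² lying on a circle with center O and radius r > 0, let u ∈ ℝ² be nonzero, and let ℓ = {M + t·u : t ∈ ℝ} be a line containing none of A, B, C, D. Suppose some conic G through A, B, C, D, given by a polynomial not proportional to (x − O₁)² + (y − O₂)² − r², meets ℓ in exactly two points P ≠ Q with dist(O, P) = dist(O, Q) and M = (P + Q)/2. Then there exist conics f₁ and f₂ through A, B, C, D and constants c₁ ≠ 0, c₂ ≠ 0 such that f₁(M + t·u) = c₁·t² for all t ∈ ℝ (a conic tangent to ℓ at M) and f₂(M + t·u) = c₂ for all t ∈ ℝ (a hyperbola having ℓ as an asymptote). -/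

import Mathlib

/-- A conic (possibly degenerate) in the affine plane `ℝ × ℝ`, given by the six
coefficients of a polynomial `a·x² + b·x·y + c·y² + d·x + e·y + g`. -/
structure Conic where
  a : ℝ
  b : ℝ
  c : ℝ
  d : ℝ
  e : ℝ
  g : ℝ

/-- Evaluation of the defining polynomial of a conic at a point of `ℝ × ℝ`. -/
def Conic.eval (f : Conic) (p : ℝ × ℝ) : ℝ :=
  f.a * p.1 ^ 2 + f.b * p.1 * p.2 + f.c * p.2 ^ 2 + f.d * p.1 + f.e * p.2 + f.g

/-- The defining polynomial is nonzero. -/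
def Conic.Nonzero (f : Conic) : Prop :=
  ¬ (f.a = 0 ∧ f.b = 0 ∧ f.c = 0 ∧ f.d = 0 ∧ f.e = 0 ∧ f.g = 0)

/-- The conic passes through the four points `A`, `B`, `C`, `D`. -/
def Conic.Through (f : Conic) (A B C D : ℝ × ℝ) : Prop :=
  f.eval A = 0 ∧ f.eval B = 0 ∧ f.eval C = 0 ∧ f.eval D = 0

/-- No three of the four points `A`, `B`, `C`, `D` are collinear. -/
def NoThreeCollinear (A B C D : ℝ × ℝ) : Prop :=
  ¬ Collinear ℝ ({A, B, C} : Set (ℝ × ℝ)) ∧ ¬ Collinear ℝ ({A, B, D} : Set (ℝ × ℝ)) ∧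
  ¬ Collinear ℝ ({A, C, D} : Set (ℝ × ℝ)) ∧ ¬ Collinear ℝ ({B, C, D} : Set (ℝ × ℝ))

/-- The line through `M` with direction `u`. -/
def parmLine (M u : ℝ × ℝ) : Set (ℝ × ℝ) :=
  {p | ∃ t : ℝ, p = M + t • u}

/-- The polynomial `(x − O₁)² + (y − O₂)² − r²` of the circle with center `O` and
radius `r`, as a conic. -/
def circleConic (O : ℝ × ℝ) (r : ℝ) : Conic :=
  ⟨1, 0, 1, -2 * O.1, -2 * O.2, O.1 ^ 2 + O.2 ^ 2 - r ^ 2⟩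

/-- The polynomial of `f` is proportional to that of `h`. -/
def Conic.PropTo (f h : Conic) : Prop :=
  ∃ k : ℝ, f.a = k * h.a ∧ f.b = k * h.b ∧ f.c = k * h.c ∧
    f.d = k * h.d ∧ f.e = k * h.e ∧ f.g = k * h.g

/-- `P` lies on the circle with center `O` and radius `r`. -/
def OnCircle (P O : ℝ × ℝ) (r : ℝ) : Prop :=
  (P.1 - O.1) ^ 2 + (P.2 - O.2) ^ 2 = r ^ 2

set_option maxHeartbeats 1000000 in
theorem circle_line_three (O : ℝ × ℝ) (A B C : ℝ × ℝ) (r m n k : ℝ)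
    (hmn : ¬ (m = 0 ∧ n = 0))
    (hA : (A.1 - O.1) ^ 2 + (A.2 - O.2) ^ 2 = r ^ 2)
    (hB : (B.1 - O.1) ^ 2 + (B.2 - O.2) ^ 2 = r ^ 2)
    (hC : (C.1 - O.1) ^ 2 + (C.2 - O.2) ^ 2 = r ^ 2)
    (lA : m * A.1 + n * A.2 + k = 0)
    (lB : m * B.1 + n * B.2 + k = 0)
    (lC : m * C.1 + n * C.2 + k = 0)
    (hAB : A ≠ B) (hAC : A ≠ C) (hBC : B ≠ C) : False := by
  rcases not_and_or.mp hmn with hm | hn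
  · have h2AB : A.2 ≠ B.2 := fun h =>
      hAB (Prod.ext (mul_left_cancel₀ hm (by linear_combination lA - lB - n * h)) h)
    have h2AC : A.2 ≠ C.2 := fun h =>
      hAC (Prod.ext (mul_left_cancel₀ hm (by linear_combination lA - lC - n * h)) h)
    have h2BC : B.2 ≠ C.2 := fun h =>
      hBC (Prod.ext (mul_left_cancel₀ hm (by linear_combination lB - lC - n * h)) h)
    have qA : (n*A.2 + k + m*O.1)^2 + m^2*(A.2 - O.2)^2 - m^2*r^2 = 0 := by
      linear_combination m^2*hA + (n*A.2 + k + 2*m*O.1 - m*A.1)*lA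
    have qB : (n*B.2 + k + m*O.1)^2 + m^2*(B.2 - O.2)^2 - m^2*r^2 = 0 := by
      linear_combination m^2*hB + (n*B.2 + k + 2*m*O.1 - m*B.1)*lB
    have qC : (n*C.2 + k + m*O.1)^2 + m^2*(C.2 - O.2)^2 - m^2*r^2 = 0 := by
      linear_combination m^2*hC + (n*C.2 + k + 2*m*O.1 - m*C.1)*lC
    have sAB : (n^2+m^2)*(A.2+B.2) + 2*(n*(k+m*O.1) - m^2*O.2) = 0 :=
      mul_left_cancel₀ (sub_ne_zero.mpr h2AB) (by linear_combination qA - qB)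
    have sAC : (n^2+m^2)*(A.2+C.2) + 2*(n*(k+m*O.1) - m^2*O.2) = 0 :=
      mul_left_cancel₀ (sub_ne_zero.mpr h2AC) (by linear_combination qA - qC)
    have hpos : (0:ℝ) < n^2 + m^2 := by positivity
    exact h2BC (mul_left_cancel₀ (ne_of_gt hpos) (by linear_combination sAB - sAC))
  · have h1AB : A.1 ≠ B.1 := fun h =>
      hAB (Prod.ext h (mul_left_cancel₀ hn (by linear_combination lA - lB - m * h)))
    have h1AC : A.1 ≠ C.1 := fun h =>
      hAC (Prod.ext h (mul_left_cancel₀ hn (by linear_combination lA - lC - m * h)))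
    have h1BC : B.1 ≠ C.1 := fun h =>
      hBC (Prod.ext h (mul_left_cancel₀ hn (by linear_combination lB - lC - m * h)))
    have qA : (m*A.1 + k + n*O.2)^2 + n^2*(A.1 - O.1)^2 - n^2*r^2 = 0 := by
      linear_combination n^2*hA + (m*A.1 + k + 2*n*O.2 - n*A.2)*lA
    have qB : (m*B.1 + k + n*O.2)^2 + n^2*(B.1 - O.1)^2 - n^2*r^2 = 0 := by
      linear_combination n^2*hB + (m*B.1 + k + 2*n*O.2 - n*B.2)*lB
    have qC : (m*C.1 + k + n*O.2)^2 + n^2*(C.1 - O.1)^2 - n^2*r^2 = 0 := by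
      linear_combination n^2*hC + (m*C.1 + k + 2*n*O.2 - n*C.2)*lC
    have sAB : (m^2+n^2)*(A.1+B.1) + 2*(m*(k+n*O.2) - n^2*O.1) = 0 :=
      mul_left_cancel₀ (sub_ne_zero.mpr h1AB) (by linear_combination qA - qB)
    have sAC : (m^2+n^2)*(A.1+C.1) + 2*(m*(k+n*O.2) - n^2*O.1) = 0 :=
      mul_left_cancel₀ (sub_ne_zero.mpr h1AC) (by linear_combination qA - qC)
    have hpos : (0:ℝ) < m^2 + n^2 := by positivity
    exact h1BC (mul_left_cancel₀ (ne_of_gt hpos) (by linear_combination sAB - sAC))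

set_option maxHeartbeats 1000000 in
theorem conic_line_vanish(O : ℝ × ℝ) (r : ℝ) (A B C M u : ℝ × ℝ) (hu : u ≠ 0)
    (hA : OnCircle A O r) (hB : OnCircle B O r) (hC : OnCircle C O r)
    (hAB : A ≠ B) (hAC : A ≠ C) (hBC : B ≠ C)
    (hAl : A ∉ parmLine M u) (hBl : B ∉ parmLine M u) (hCl : C ∉ parmLine M u)
    (H : Conic) (hHA : H.eval A = 0) (hHB : H.eval B = 0) (hHC : H.eval C = 0)
    (hline : ∀ t : ℝ, H.eval (M + t • u) = 0) :
    H.a = 0 ∧ H.b = 0 ∧ H.c = 0 ∧ H.d = 0 ∧ H.e = 0 ∧ H.g = 0 := by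
  have hu' : ¬ (u.1 = 0 ∧ u.2 = 0) := by
    intro ⟨h1, h2⟩; exact hu (Prod.ext h1 h2)
  have e0 := hline 0
  have e1 := hline 1
  have e2 := hline (-1)
  simp only [Conic.eval, Prod.fst_add, Prod.snd_add, Prod.smul_fst, Prod.smul_snd,
    smul_eq_mul] at e0 e1 e2
  have hα : H.a * u.1 ^ 2 + H.b * u.1 * u.2 + H.c * u.2 ^ 2 = 0 := by
    linear_combination e1 / 2 + e2 / 2 - e0
  have hβ : (2 * H.a * M.1 + H.b * M.2 + H.d) * u.1
      + (H.b * M.1 + 2 * H.c * M.2 + H.e) * u.2 = 0 := by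
    linear_combination e1 / 2 - e2 / 2
  have hγ : H.a * M.1 ^ 2 + H.b * M.1 * M.2 + H.c * M.2 ^ 2
      + H.d * M.1 + H.e * M.2 + H.g = 0 := by linear_combination e0
  have hL : ∀ X : ℝ × ℝ, X ∉ parmLine M u → u.2 * (X.1 - M.1) - u.1 * (X.2 - M.2) ≠ 0 := by
    intro X hX hz
    apply hX
    rcases not_and_or.mp hu' with h1 | h2
    · exact ⟨(X.1 - M.1) / u.1, Prod.ext (by simp only [Prod.fst_add, Prod.snd_add, Prod.smul_fst, Prod.smul_snd, smul_eq_mul]; field_simp; ring)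
        (by simp only [Prod.fst_add, Prod.snd_add, Prod.smul_fst, Prod.smul_snd, smul_eq_mul]; field_simp; linear_combination -hz)⟩
    · exact ⟨(X.2 - M.2) / u.2, Prod.ext (by simp only [Prod.fst_add, Prod.snd_add, Prod.smul_fst, Prod.smul_snd, smul_eq_mul]; field_simp; linear_combination hz)
        (by simp only [Prod.fst_add, Prod.snd_add, Prod.smul_fst, Prod.smul_snd, smul_eq_mul]; field_simp; ring)⟩
  by_cases hu1 : u.1 ≠ 0
  · have key : ∀ X : ℝ × ℝ, u.1 ^ 2 * H.eval X =
        (u.2 * (X.1 - M.1) - u.1 * (X.2 - M.2)) *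
          ((-(H.c * u.2 + H.b * u.1)) * X.1 + (-(H.c * u.1)) * X.2 +
            (-(H.b * M.1 + 2 * H.c * M.2 + H.e) * u.1 - (-(H.c * u.2 + H.b * u.1)) * M.1
              - (-(H.c * u.1)) * M.2)) := by
      intro X
      simp only [Conic.eval]
      linear_combination (X.1 - M.1) ^ 2 * hα + u.1 * (X.1 - M.1) * hβ + u.1 ^ 2 * hγ
    have linEq : ∀ X : ℝ × ℝ, X ∉ parmLine M u → H.eval X = 0 →
        (-(H.c * u.2 + H.b * u.1)) * X.1 + (-(H.c * u.1)) * X.2 +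
          (-(H.b * M.1 + 2 * H.c * M.2 + H.e) * u.1 - (-(H.c * u.2 + H.b * u.1)) * M.1
            - (-(H.c * u.1)) * M.2) = 0 := by
      intro X hX hE
      have h := key X
      rw [hE, mul_zero] at h
      exact (mul_eq_zero.mp h.symm).resolve_left (hL X hX)
    by_cases hmn : -(H.c * u.2 + H.b * u.1) = 0 ∧ -(H.c * u.1) = 0
    · have hc : H.c = 0 := (mul_eq_zero.mp (neg_eq_zero.mp hmn.2)).resolve_right hu1
      have hb : H.b = 0 := by
        have h : H.b * u.1 = 0 := by linear_combination -hmn.1 - u.2 * hc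
        exact (mul_eq_zero.mp h).resolve_right hu1
      have ha : H.a = 0 := by
        have h : H.a * u.1 ^ 2 = 0 := by
          linear_combination hα - u.1 * u.2 * hb - u.2 ^ 2 * hc
        exact (mul_eq_zero.mp h).resolve_right (pow_ne_zero 2 hu1)
      have he : H.e = 0 := by
        have h0 := linEq A hAl hHA
        have h : (H.b * M.1 + 2 * H.c * M.2 + H.e) * u.1 = 0 := by
          linear_combination -h0 + (A.1 - M.1) * hmn.1 + (A.2 - M.2) * hmn.2
        have he' := (mul_eq_zero.mp h).resolve_right hu1
        linear_combination he' - M.1 * hb - 2 * M.2 * hc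
      have hd : H.d = 0 := by
        have h : (2 * H.a * M.1 + H.b * M.2 + H.d) * u.1 = 0 := by
          linear_combination hβ - u.2 * M.1 * hb - 2 * u.2 * M.2 * hc - u.2 * he
        have hd' := (mul_eq_zero.mp h).resolve_right hu1
        linear_combination hd' - 2 * M.1 * ha - M.2 * hb
      have hg : H.g = 0 := by
        linear_combination hγ - M.1 ^ 2 * ha - M.1 * M.2 * hb - M.2 ^ 2 * hc
          - M.1 * hd - M.2 * he
      exact ⟨ha, hb, hc, hd, he, hg⟩
    · exact absurd (circle_line_three O A B C r _ _ _ hmn hA hB hC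
        (linEq A hAl hHA) (linEq B hBl hHB) (linEq C hCl hHC) hAB hAC hBC) not_false
  · push_neg at hu1
    have hu2 : u.2 ≠ 0 := fun h => hu' ⟨hu1, h⟩
    have key : ∀ X : ℝ × ℝ, u.2 ^ 2 * H.eval X =
        (u.2 * (X.1 - M.1) - u.1 * (X.2 - M.2)) *
          ((H.a * u.2) * X.1 + (H.b * u.2 + H.a * u.1) * X.2 +
            ((2 * H.a * M.1 + H.b * M.2 + H.d) * u.2 - (H.a * u.2) * M.1
              - (H.b * u.2 + H.a * u.1) * M.2)) := by
      intro X
      simp only [Conic.eval]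
      linear_combination (X.2 - M.2) ^ 2 * hα + u.2 * (X.2 - M.2) * hβ + u.2 ^ 2 * hγ
    have linEq : ∀ X : ℝ × ℝ, X ∉ parmLine M u → H.eval X = 0 →
        (H.a * u.2) * X.1 + (H.b * u.2 + H.a * u.1) * X.2 +
          ((2 * H.a * M.1 + H.b * M.2 + H.d) * u.2 - (H.a * u.2) * M.1
            - (H.b * u.2 + H.a * u.1) * M.2) = 0 := by
      intro X hX hE
      have h := key X
      rw [hE, mul_zero] at h
      exact (mul_eq_zero.mp h.symm).resolve_left (hL X hX)
    by_cases hmn : H.a * u.2 = 0 ∧ H.b * u.2 + H.a * u.1 = 0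
    · have ha : H.a = 0 := (mul_eq_zero.mp hmn.1).resolve_right hu2
      have hb : H.b = 0 := by
        have h : H.b * u.2 = 0 := by linear_combination hmn.2 - u.1 * ha
        exact (mul_eq_zero.mp h).resolve_right hu2
      have hc : H.c = 0 := by
        have h : H.c * u.2 ^ 2 = 0 := by
          linear_combination hα - u.1 ^ 2 * ha - u.1 * u.2 * hb
        exact (mul_eq_zero.mp h).resolve_right (pow_ne_zero 2 hu2)
      have hd : H.d = 0 := by
        have h0 := linEq A hAl hHA
        have h : (2 * H.a * M.1 + H.b * M.2 + H.d) * u.2 = 0 := by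
          linear_combination h0 - (A.1 - M.1) * hmn.1 - (A.2 - M.2) * hmn.2
        have hd' := (mul_eq_zero.mp h).resolve_right hu2
        linear_combination hd' - 2 * M.1 * ha - M.2 * hb
      have he : H.e = 0 := by
        have h : (H.b * M.1 + 2 * H.c * M.2 + H.e) * u.2 = 0 := by
          linear_combination hβ - 2 * u.1 * M.1 * ha - u.1 * M.2 * hb - u.1 * hd
        have he' := (mul_eq_zero.mp h).resolve_right hu2
        linear_combination he' - M.1 * hb - 2 * M.2 * hc
      have hg : H.g = 0 := by
        linear_combination hγ - M.1 ^ 2 * ha - M.1 * M.2 * hb - M.2 ^ 2 * hc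
          - M.1 * hd - M.2 * he
      exact ⟨ha, hb, hc, hd, he, hg⟩
    · exact absurd (circle_line_three O A B C r _ _ _ hmn hA hB hC
        (linEq A hAl hHA) (linEq B hBl hHB) (linEq C hCl hHC) hAB hAC hBC) not_false

private theorem Conic.nonzero_of_eval_ne {f : Conic} {X : ℝ × ℝ} (h : f.eval X ≠ 0) :
    f.Nonzero := by
  intro hz
  apply h
  simp only [Conic.eval, hz.1, hz.2.1, hz.2.2.1, hz.2.2.2.1, hz.2.2.2.2.1, hz.2.2.2.2.2]
  ring

set_option maxHeartbeats 1000000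
/-- In the concyclic butterfly configuration (four base points on a circle with
center `O`, a conic of the family cutting the line `ℓ = {M + t·u}` in two points
equidistant from `O` with midpoint `M`), the family of conics through the four
base points contains a conic tangent to `ℓ` at `M` (restriction `c₁·t²`) and a
hyperbola with `ℓ` as an asymptote (restriction a nonzero constant `c₂`). -/
theorem tangent_and_asymptote_conics_exist
    (O : ℝ × ℝ) (r : ℝ) (hr : 0 < r)
    (A B C D : ℝ × ℝ)
    (hAB : A ≠ B) (hAC : A ≠ C) (hAD : A ≠ D)
    (hBC : B ≠ C) (hBD : B ≠ D) (hCD : C ≠ D)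
    (hA : OnCircle A O r) (hB : OnCircle B O r)
    (hC : OnCircle C O r) (hD : OnCircle D O r)
    (M u : ℝ × ℝ) (hu : u ≠ 0)
    (hAl : A ∉ parmLine M u) (hBl : B ∉ parmLine M u)
    (hCl : C ∉ parmLine M u) (hDl : D ∉ parmLine M u)
    (G : Conic) (hG0 : G.Nonzero) (hG : G.Through A B C D)
    (hGcirc : ¬ G.PropTo (circleConic O r))
    (P Q : ℝ × ℝ) (hPQ : P ≠ Q)
    (hGl : {p ∈ parmLine M u | G.eval p = 0} = {P, Q})
    (hdist : (P.1 - O.1) ^ 2 + (P.2 - O.2) ^ 2 = (Q.1 - O.1) ^ 2 + (Q.2 - O.2) ^ 2)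
    (hM : M = midpoint ℝ P Q) :
    (∃ f₁ : Conic, f₁.Nonzero ∧ f₁.Through A B C D ∧
      ∃ c₁ : ℝ, c₁ ≠ 0 ∧ ∀ t : ℝ, f₁.eval (M + t • u) = c₁ * t ^ 2) ∧
    (∃ f₂ : Conic, f₂.Nonzero ∧ f₂.Through A B C D ∧
      ∃ c₂ : ℝ, c₂ ≠ 0 ∧ ∀ t : ℝ, f₂.eval (M + t • u) = c₂) := by
  have hu' : ¬ (u.1 = 0 ∧ u.2 = 0) := by
    intro ⟨h1, h2⟩; exact hu (Prod.ext h1 h2)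
  -- P and Q on the line
  have hPmem : P ∈ {p ∈ parmLine M u | G.eval p = 0} := by
    rw [hGl]; exact Set.mem_insert _ _
  obtain ⟨⟨tP, hP⟩, hGP⟩ := hPmem
  have hQmem : Q ∈ {p ∈ parmLine M u | G.eval p = 0} := by
    rw [hGl]; exact Set.mem_insert_iff.mpr (Or.inr rfl)
  obtain ⟨⟨tQ, hQ⟩, hGQ⟩ := hQmem
  have hP1 : P.1 = M.1 + tP * u.1 := by
    have := congrArg Prod.fst hP
    simpa [Prod.fst_add, Prod.smul_fst] using this
  have hP2 : P.2 = M.2 + tP * u.2 := by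
    have := congrArg Prod.snd hP
    simpa [Prod.snd_add, Prod.smul_snd] using this
  have hQ1 : Q.1 = M.1 + tQ * u.1 := by
    have := congrArg Prod.fst hQ
    simpa [Prod.fst_add, Prod.smul_fst] using this
  have hQ2 : Q.2 = M.2 + tQ * u.2 := by
    have := congrArg Prod.snd hQ
    simpa [Prod.snd_add, Prod.smul_snd] using this
  -- midpoint condition
  have hsum : P + Q = M + M := by rw [hM]; exact (midpoint_add_self ℝ P Q).symm
  have hsum1 : P.1 + Q.1 = M.1 + M.1 := by
    have := congrArg Prod.fst hsum; simpa using this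
  have hsum2 : P.2 + Q.2 = M.2 + M.2 := by
    have := congrArg Prod.snd hsum; simpa using this
  have htPQ : tP + tQ = 0 := by
    rcases not_and_or.mp hu' with hc | hc
    · have h : (tP + tQ) * u.1 = 0 := by linear_combination hsum1 - hP1 - hQ1
      exact (mul_eq_zero.mp h).resolve_right hc
    · have h : (tP + tQ) * u.2 = 0 := by linear_combination hsum2 - hP2 - hQ2
      exact (mul_eq_zero.mp h).resolve_right hc
  have htQ : tQ = -tP := by linarith
  have htP0 : tP ≠ 0 := by
    intro h
    apply hPQ
    rw [hP, hQ, h, htQ, h, neg_zero]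
  -- perpendicularity of M-O and u
  have hperp : (M.1 - O.1) * u.1 + (M.2 - O.2) * u.2 = 0 := by
    rw [hP1, hP2, hQ1, hQ2, htQ] at hdist
    have h4 : (4 * tP) * ((M.1 - O.1) * u.1 + (M.2 - O.2) * u.2) = (4 * tP) * 0 := by
      linear_combination hdist
    exact mul_left_cancel₀ (mul_ne_zero four_ne_zero htP0) h4
  -- abbreviations
  obtain ⟨ga, hgad⟩ : ∃ x : ℝ, x = G.a * u.1 ^ 2 + G.b * u.1 * u.2 + G.c * u.2 ^ 2 := ⟨_, rfl⟩
  obtain ⟨gb, hgbd⟩ : ∃ x : ℝ, x = (2 * G.a * M.1 + G.b * M.2 + G.d) * u.1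
      + (G.b * M.1 + 2 * G.c * M.2 + G.e) * u.2 := ⟨_, rfl⟩
  obtain ⟨g0, hg0d⟩ : ∃ x : ℝ, x = G.a * M.1 ^ 2 + G.b * M.1 * M.2 + G.c * M.2 ^ 2
      + G.d * M.1 + G.e * M.2 + G.g := ⟨_, rfl⟩
  obtain ⟨nu, hnud⟩ : ∃ x : ℝ, x = u.1 ^ 2 + u.2 ^ 2 := ⟨_, rfl⟩
  obtain ⟨s0, hs0d⟩ : ∃ x : ℝ, x = (M.1 - O.1) ^ 2 + (M.2 - O.2) ^ 2 - r ^ 2 := ⟨_, rfl⟩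
  have hnu : nu ≠ 0 := by
    rcases not_and_or.mp hu' with hc | hc
    · have : 0 < u.1 ^ 2 := by positivity
      nlinarith [sq_nonneg u.2]
    · have : 0 < u.2 ^ 2 := by positivity
      nlinarith [sq_nonneg u.1]
  -- restrictions to the line
  have hGline : ∀ t : ℝ, G.eval (M + t • u) = ga * t ^ 2 + gb * t + g0 := by
    intro t
    simp only [Conic.eval, Prod.fst_add, Prod.snd_add, Prod.smul_fst, Prod.smul_snd,
      smul_eq_mul]
    linear_combination (-(t ^ 2)) * hgad - t * hgbd - hg0d
  have hSrest : ∀ t : ℝ, ((M + t • u).1 - O.1) ^ 2 + ((M + t • u).2 - O.2) ^ 2 - r ^ 2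
      = nu * t ^ 2 + s0 := by
    intro t
    simp only [Prod.fst_add, Prod.snd_add, Prod.smul_fst, Prod.smul_snd, smul_eq_mul]
    linear_combination (2 * t) * hperp - t ^ 2 * hnud - hs0d
  -- structure of the restriction of G
  have hGP' : ga * tP ^ 2 + gb * tP + g0 = 0 := by
    rw [← hGline tP, ← hP]; exact hGP
  have hGQ' : ga * tP ^ 2 - gb * tP + g0 = 0 := by
    have h := hGQ
    rw [hQ, hGline tQ, htQ] at h
    linear_combination h
  have hgb : gb = 0 := by
    have h : gb * (2 * tP) = 0 := by linear_combination hGP' - hGQ'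
    exact (mul_eq_zero.mp h).resolve_right (mul_ne_zero two_ne_zero htP0)
  have hg0 : g0 = -(ga * tP ^ 2) := by linear_combination hGP' - tP * hgb
  have hcircA : (A.1 - O.1) ^ 2 + (A.2 - O.2) ^ 2 - r ^ 2 = 0 := by
    rw [hA]; ring
  have hcircB : (B.1 - O.1) ^ 2 + (B.2 - O.2) ^ 2 - r ^ 2 = 0 := by
    rw [hB]; ring
  have hcircC : (C.1 - O.1) ^ 2 + (C.2 - O.2) ^ 2 - r ^ 2 = 0 := by
    rw [hC]; ring
  have hcircD : (D.1 - O.1) ^ 2 + (D.2 - O.2) ^ 2 - r ^ 2 = 0 := by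
    rw [hD]; ring
  have hga : ga ≠ 0 := by
    intro h
    have hM0 : G.eval M = 0 := by
      have h' := hGline 0
      simp only [zero_smul, add_zero] at h'
      rw [h']
      rw [hg0, h]; ring
    have hMmem : M ∈ ({P, Q} : Set (ℝ × ℝ)) := by
      rw [← hGl]
      exact ⟨⟨0, by simp⟩, hM0⟩
    have hinj : ∀ s t : ℝ, M + s • u = M + t • u → s = t := by
      intro s t hst
      rcases not_and_or.mp hu' with hc | hc
      · have h1 := congrArg Prod.fst hst
        simp only [Prod.fst_add, Prod.smul_fst, smul_eq_mul, add_right_inj] at h1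
        exact mul_right_cancel₀ hc h1
      · have h1 := congrArg Prod.snd hst
        simp only [Prod.snd_add, Prod.smul_snd, smul_eq_mul, add_right_inj] at h1
        exact mul_right_cancel₀ hc h1
    rcases hMmem with h' | h'
    · have h0 : (0 : ℝ) = tP := by
        apply hinj
        rw [zero_smul, add_zero, ← hP, ← h']
      exact htP0 h0.symm
    · have h0 : (0 : ℝ) = tQ := by
        apply hinj
        rw [zero_smul, add_zero, ← hQ, ← h']
      rw [htQ] at h0
      exact htP0 (neg_eq_zero.mp h0.symm)
  -- the crucial nondegeneracy: P is not on the circle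
  have hSP : s0 + nu * tP ^ 2 ≠ 0 := by
    intro h0
    have hHev : ∀ X : ℝ × ℝ,
        (Conic.eval ⟨ga - nu * G.a, -(nu * G.b), ga - nu * G.c, ga * (-2 * O.1) - nu * G.d,
          ga * (-2 * O.2) - nu * G.e, ga * (O.1 ^ 2 + O.2 ^ 2 - r ^ 2) - nu * G.g⟩ X)
        = ga * ((X.1 - O.1) ^ 2 + (X.2 - O.2) ^ 2 - r ^ 2) - nu * G.eval X := by
      intro X; simp only [Conic.eval]; ring
    have hzero := conic_line_vanish O r A B C M u hu hA hB hC hAB hAC hBC hAl hBl hCl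
      ⟨ga - nu * G.a, -(nu * G.b), ga - nu * G.c, ga * (-2 * O.1) - nu * G.d,
        ga * (-2 * O.2) - nu * G.e, ga * (O.1 ^ 2 + O.2 ^ 2 - r ^ 2) - nu * G.g⟩
      (by rw [hHev A, hcircA, hG.1]; ring)
      (by rw [hHev B, hcircB, hG.2.1]; ring)
      (by rw [hHev C, hcircC, hG.2.2.1]; ring)
      (by
        intro t
        rw [hHev (M + t • u), hSrest t, hGline t]
        linear_combination (-(nu * t)) * hgb - nu * hg0 + ga * h0)
    apply hGcirc
    refine ⟨ga / nu, ?_, ?_, ?_, ?_, ?_, ?_⟩ <;> simp only [circleConic]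
    · field_simp; linear_combination -hzero.1
    · rw [mul_zero]
      exact (mul_eq_zero.mp (neg_eq_zero.mp hzero.2.1)).resolve_left hnu
    · field_simp; linear_combination -hzero.2.2.1
    · field_simp; linear_combination -hzero.2.2.2.1
    · field_simp; linear_combination -hzero.2.2.2.2.1
    · field_simp; linear_combination -hzero.2.2.2.2.2
  constructor
  · -- the conic tangent to the line at M
    have hev : ∀ X : ℝ × ℝ,
        (Conic.eval ⟨g0 - s0 * G.a, -(s0 * G.b), g0 - s0 * G.c, g0 * (-2 * O.1) - s0 * G.d,
          g0 * (-2 * O.2) - s0 * G.e, g0 * (O.1 ^ 2 + O.2 ^ 2 - r ^ 2) - s0 * G.g⟩ X)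
        = g0 * ((X.1 - O.1) ^ 2 + (X.2 - O.2) ^ 2 - r ^ 2) - s0 * G.eval X := by
      intro X; simp only [Conic.eval]; ring
    have hrest : ∀ t : ℝ,
        (Conic.eval ⟨g0 - s0 * G.a, -(s0 * G.b), g0 - s0 * G.c, g0 * (-2 * O.1) - s0 * G.d,
          g0 * (-2 * O.2) - s0 * G.e, g0 * (O.1 ^ 2 + O.2 ^ 2 - r ^ 2) - s0 * G.g⟩ (M + t • u))
        = (g0 * nu - s0 * ga) * t ^ 2 := by
      intro t
      rw [hev (M + t • u), hSrest t, hGline t]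
      linear_combination (-(s0 * t)) * hgb
    have hc1 : g0 * nu - s0 * ga ≠ 0 := by
      have h : g0 * nu - s0 * ga = -(ga * (s0 + nu * tP ^ 2)) := by rw [hg0]; ring
      rw [h]
      exact neg_ne_zero.mpr (mul_ne_zero hga hSP)
    refine ⟨⟨g0 - s0 * G.a, -(s0 * G.b), g0 - s0 * G.c, g0 * (-2 * O.1) - s0 * G.d,
      g0 * (-2 * O.2) - s0 * G.e, g0 * (O.1 ^ 2 + O.2 ^ 2 - r ^ 2) - s0 * G.g⟩, ?_, ?_,
      g0 * nu - s0 * ga, hc1, hrest⟩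
    · refine Conic.nonzero_of_eval_ne (X := M + (1 : ℝ) • u) ?_
      rw [hrest 1]
      simpa using hc1
    · exact ⟨by rw [hev A, hcircA, hG.1]; ring, by rw [hev B, hcircB, hG.2.1]; ring,
        by rw [hev C, hcircC, hG.2.2.1]; ring, by rw [hev D, hcircD, hG.2.2.2]; ring⟩
  · -- the hyperbola with the line as asymptote
    have hev : ∀ X : ℝ × ℝ,
        (Conic.eval ⟨ga - nu * G.a, -(nu * G.b), ga - nu * G.c, ga * (-2 * O.1) - nu * G.d,
          ga * (-2 * O.2) - nu * G.e, ga * (O.1 ^ 2 + O.2 ^ 2 - r ^ 2) - nu * G.g⟩ X)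
        = ga * ((X.1 - O.1) ^ 2 + (X.2 - O.2) ^ 2 - r ^ 2) - nu * G.eval X := by
      intro X; simp only [Conic.eval]; ring
    have hrest : ∀ t : ℝ,
        (Conic.eval ⟨ga - nu * G.a, -(nu * G.b), ga - nu * G.c, ga * (-2 * O.1) - nu * G.d,
          ga * (-2 * O.2) - nu * G.e, ga * (O.1 ^ 2 + O.2 ^ 2 - r ^ 2) - nu * G.g⟩ (M + t • u))
        = ga * s0 - nu * g0 := by
      intro t
      rw [hev (M + t • u), hSrest t, hGline t]
      linear_combination (-(nu * t)) * hgb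
    have hc2 : ga * s0 - nu * g0 ≠ 0 := by
      have h : ga * s0 - nu * g0 = ga * (s0 + nu * tP ^ 2) := by rw [hg0]; ring
      rw [h]
      exact mul_ne_zero hga hSP
    refine ⟨⟨ga - nu * G.a, -(nu * G.b), ga - nu * G.c, ga * (-2 * O.1) - nu * G.d,
      ga * (-2 * O.2) - nu * G.e, ga * (O.1 ^ 2 + O.2 ^ 2 - r ^ 2) - nu * G.g⟩, ?_, ?_,
      ga * s0 - nu * g0, hc2, hrest⟩
    · refine Conic.nonzero_of_eval_ne (X := M + (1 : ℝ) • u) ?_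
      rw [hrest 1]
      exact hc2
    · exact ⟨by rw [hev A, hcircA, hG.1]; ring, by rw [hev B, hcircB, hG.2.1]; ring,
        by rw [hev C, hcircC, hG.2.2.1]; ring, by rw [hev D, hcircD, hG.2.2.2]; ring⟩
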